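/- Let W be a finite Coxeter group with longest element w₀. For any standard parabolic subgroup W_L with longest element w₀L, the element w₀L w₀ maps each v < w₀ w₀L outside W_L after left multiplication: for all v ∈ W with v < w₀ w₀L in the Bruhat order, w₀L w₀ v ∉ W_L. -/

import Mathlib

/-- Bruhat order on a Coxeter group, via the subword property: `u ≤ v` iff some
reduced word for `v` has a sublist whose product is `u`. -/
def CoxeterSystem.bruhatLE {B W : Type*} [Group W] {M : CoxeterMatrix B}
    (cs : CoxeterSystem M W) (u v : W) : Prop :=
  ∃ ω : List B, cs.IsReduced ω ∧ v = cs.wordProd ω ∧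
    ∃ ω' : List B, ω'.Sublist ω ∧ u = cs.wordProd ω'

/-- Strict Bruhat order. -/
def CoxeterSystem.bruhatLT {B W : Type*} [Group W] {M : CoxeterMatrix B}
    (cs : CoxeterSystem M W) (u v : W) : Prop :=
  cs.bruhatLE u v ∧ u ≠ v

/-- The standard parabolic subgroup generated by the simple reflections indexed by `L`. -/
def CoxeterSystem.parabolic {B W : Type*} [Group W] {M : CoxeterMatrix B}
    (cs : CoxeterSystem M W) (L : Set B) : Subgroup W :=
  Subgroup.closure (cs.simple '' L)

namespace ExchAux

open List CoxeterSystem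
open scoped Classical

variable {B W : Type*} [Group W] {M : CoxeterMatrix B} (cs : CoxeterSystem M W)

/-- The basic "flip" map on `W × ZMod 2` attached to a simple reflection. -/
noncomputable def flipFun (i : B) : W × ZMod 2 → W × ZMod 2 :=
  fun p => (cs.simple i * p.1 * cs.simple i, p.2 + if p.1 = cs.simple i then 1 else 0)

lemma simple_conj_eq_iff (i : B) (x : W) :
    cs.simple i * x * cs.simple i = cs.simple i ↔ x = cs.simple i := by
  constructor
  · intro h
    have h' : x * cs.simple i = 1 := by
      apply mul_left_cancel (a := cs.simple i)
      rw [← mul_assoc, h, mul_one]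
    have h'' := eq_inv_of_mul_eq_one_left h'
    rw [cs.inv_simple] at h''
    exact h'' 
  · rintro rfl
    rw [cs.simple_mul_simple_self, one_mul]

lemma flipFun_involutive (i : B) : Function.Involutive (flipFun cs i) := by
  intro p
  unfold flipFun
  have h1 : cs.simple i * (cs.simple i * p.1 * cs.simple i) * cs.simple i = p.1 := by
    rw [show cs.simple i * (cs.simple i * p.1 * cs.simple i) * cs.simple i
        = cs.simple i * (cs.simple i * p.1) * (cs.simple i * cs.simple i) by group,
      cs.simple_mul_simple_self, mul_one, cs.simple_mul_simple_cancel_left]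
  have h2 : ((cs.simple i * p.1 * cs.simple i = cs.simple i) ↔ (p.1 = cs.simple i)) :=
    simple_conj_eq_iff cs i p.1
  ext
  · exact h1
  · show p.2 + _ + _ = p.2
    simp only [h2]
    have h11 : (1 : ZMod 2) + 1 = 0 := by decide
    by_cases h : p.1 = cs.simple i
    · simp only [if_pos h, add_assoc, h11, add_zero]
    · simp only [if_neg h, add_zero]

/-- The flip permutation attached to a simple reflection. -/
noncomputable def flipPerm (i : B) : Equiv.Perm (W × ZMod 2) :=
  Function.Involutive.toPerm _ (flipFun_involutive cs i)

/-- Composite of flips along a word. -/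
noncomputable def flipWord (ω : List B) : Equiv.Perm (W × ZMod 2) :=
  (ω.map (flipPerm cs)).prod

lemma flipWord_nil : flipWord cs ([] : List B) = 1 := by simp [flipWord]

lemma flipWord_cons (i : B) (ω : List B) :
    flipWord cs (i :: ω) = flipPerm cs i * flipWord cs ω := by
  simp [flipWord]

lemma flipWord_apply (ω : List B) (p : W × ZMod 2) :
    flipWord cs ω p = (cs.wordProd ω * p.1 * (cs.wordProd ω)⁻¹,
      p.2 + ((cs.rightInvSeq ω).count p.1 : ZMod 2)) := by
  induction ω with
  | nil => simp [flipWord_nil, cs.wordProd_nil]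
  | cons i ω ih =>
    rw [flipWord_cons, Equiv.Perm.mul_apply, ih]
    show flipFun cs i _ = _
    unfold flipFun
    have hris : cs.rightInvSeq (i :: ω)
        = ((cs.wordProd ω)⁻¹ * cs.simple i * cs.wordProd ω) :: cs.rightInvSeq ω := rfl
    have hcond : (cs.wordProd ω * p.1 * (cs.wordProd ω)⁻¹ = cs.simple i)
        ↔ ((cs.wordProd ω)⁻¹ * cs.simple i * cs.wordProd ω = p.1) := by
      constructor
      · intro h; rw [← h]; group
      · intro h; rw [← h]; group
    ext
    · show cs.simple i * _ * cs.simple i = _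
      rw [cs.wordProd_cons, mul_inv_rev, cs.inv_simple]
      group
    · show _ + _ = p.2 + _
      rw [hris, List.count_cons]
      push_cast
      rw [add_assoc]
      congr 1
      congr 1
      simp only [beq_iff_eq, hcond]

/-! ### Computations with alternating words -/

lemma alt_drop (i j : B) : ∀ (k n : ℕ), k ≤ n →
    (alternatingWord i j n).drop k = alternatingWord i j (n - k) := by
  intro k
  induction k with
  | zero => intro n _; simp
  | succ k ih =>
    intro n hn
    obtain ⟨n, rfl⟩ : ∃ m, n = m + 1 := ⟨n - 1, by omega⟩
    rw [alternatingWord_succ', List.drop_succ_cons, ih n (by omega)]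
    congr 1
    omega

lemma pow_inv_simple (i j : B) (e : ℕ) :
    ((cs.simple i * cs.simple j) ^ e)⁻¹ = (cs.simple j * cs.simple i) ^ e := by
  rw [← inv_pow, mul_inv_rev, cs.inv_simple, cs.inv_simple]

lemma simple_mul_pow (i j : B) (e : ℕ) :
    cs.simple j * (cs.simple i * cs.simple j) ^ e
      = (cs.simple j * cs.simple i) ^ e * cs.simple j := by
  induction e with
  | zero => simp
  | succ e ih =>
    rw [pow_succ', pow_succ']
    simp only [mul_assoc] at *
    rw [ih]

lemma conj_alt_letter (i j : B) (n : ℕ) :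
    (cs.wordProd (alternatingWord i j n))⁻¹ * cs.simple (if Even n then j else i)
      * cs.wordProd (alternatingWord i j n)
      = (cs.simple j * cs.simple i) ^ n * cs.simple j := by
  rcases Nat.even_or_odd n with he | ho
  · obtain ⟨e, rfl⟩ := he
    have hev : Even (e + e) := ⟨e, rfl⟩
    rw [cs.prod_alternatingWord_eq_mul_pow, if_pos hev, if_pos hev, one_mul]
    have h2 : (e + e) / 2 = e := by omega
    rw [h2, pow_inv_simple, mul_assoc, simple_mul_pow, ← mul_assoc, ← pow_add]
  · obtain ⟨e, rfl⟩ := ho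
    have hodd : ¬ Even (2 * e + 1) := by rintro ⟨c, hc⟩; omega
    rw [cs.prod_alternatingWord_eq_mul_pow, if_neg hodd, if_neg hodd]
    have h2 : (2 * e + 1) / 2 = e := by omega
    rw [h2, mul_inv_rev, pow_inv_simple, cs.inv_simple,
      show 2 * e + 1 = e + (e + 1) by omega, pow_add, pow_succ']
    simp only [mul_assoc]
    rw [simple_mul_pow cs i j e]

lemma alt_get? (i j : B) (n k : ℕ) (h : k < n) :
    (alternatingWord i j n)[k]? = some (if Even (n - k - 1) then j else i) := by
  have h1 : ((alternatingWord i j n).drop k)[0]? = (alternatingWord i j n)[k]? := by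
    rw [List.getElem?_drop, Nat.add_zero]
  rw [← h1, alt_drop i j k n (by omega)]
  obtain ⟨m, hm⟩ : ∃ m, n - k = m + 1 := ⟨n - k - 1, by omega⟩
  rw [hm, alternatingWord_succ']
  simp

lemma ris_alt_getD (i j : B) (m k : ℕ) (hk : k < 2 * m) :
    (cs.rightInvSeq (alternatingWord i j (2 * m))).getD k 1
      = (cs.simple j * cs.simple i) ^ (2 * m - 1 - k) * cs.simple j := by
  rw [cs.getD_rightInvSeq, alt_drop i j (k + 1) (2 * m) (by omega),
    alt_get? i j (2 * m) k hk]
  have h1 : 2 * m - (k + 1) = 2 * m - 1 - k := by omega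
  have h2 : 2 * m - k - 1 = 2 * m - 1 - k := by omega
  rw [h1, h2]
  have := conj_alt_letter cs i j (2 * m - 1 - k)
  simpa using this

lemma ris_alt_take_eq_drop (i j : B) :
    (cs.rightInvSeq (alternatingWord i j (2 * M i j))).take (M i j)
      = (cs.rightInvSeq (alternatingWord i j (2 * M i j))).drop (M i j) := by
  set m := M i j with hm
  have hlen : (cs.rightInvSeq (alternatingWord i j (2 * m))).length = 2 * m := by
    rw [cs.length_rightInvSeq, length_alternatingWord]
  apply List.ext_getElem
  · simp [hlen]; omega
  · intro k h1 h2
    have hk : k < m := by simp [hlen] at h1; omega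
    rw [List.getElem_take, List.getElem_drop]
    rw [← List.getD_eq_getElem _ 1 (by omega : k < _),
      ← List.getD_eq_getElem _ 1 (by rw [hlen]; omega : m + k < _)]
    rw [ris_alt_getD cs i j m k (by omega), ris_alt_getD cs i j m (m + k) (by omega)]
    have h3 : 2 * m - 1 - k = (2 * m - 1 - (m + k)) + m := by omega
    rw [h3, pow_add, hm, cs.simple_mul_simple_pow' i j, mul_one]

lemma flip_liftable : M.IsLiftable (fun i => flipPerm cs i) := by
  intro i j
  have halt : ∀ m : ℕ, (flipPerm cs i * flipPerm cs j) ^ m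
      = flipWord cs (alternatingWord i j (2 * m)) := by
    intro m
    induction m with
    | zero => simp [flipWord]; rfl
    | succ m ih =>
      have hw : alternatingWord i j (2 * (m + 1)) = i :: j :: alternatingWord i j (2 * m) := by
        rw [show 2 * (m + 1) = (2 * m + 1) + 1 by ring, alternatingWord_succ',
          alternatingWord_succ']
        have h1 : ¬ Even (2 * m + 1) := by rintro ⟨c, hc⟩; omega
        have h2 : Even (2 * m) := ⟨m, by omega⟩
        rw [if_neg h1, if_pos h2]
      rw [hw, flipWord_cons, flipWord_cons, ← ih, pow_succ']
      rw [mul_assoc]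
  rw [halt (M i j)]
  apply Equiv.ext
  intro p
  have hπ : cs.wordProd (alternatingWord i j (2 * M i j)) = 1 := by
    have hev : Even (2 * M i j) := ⟨M i j, by omega⟩
    rw [cs.prod_alternatingWord_eq_mul_pow, if_pos hev, one_mul,
      show 2 * M i j / 2 = M i j by omega, cs.simple_mul_simple_pow]
  have hcount : ((cs.rightInvSeq (alternatingWord i j (2 * M i j))).count p.1 : ZMod 2) = 0 := by
    conv_lhs => rw [← List.take_append_drop (M i j)
      (cs.rightInvSeq (alternatingWord i j (2 * M i j)))]
    rw [List.count_append, ← ris_alt_take_eq_drop]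
    push_cast
    have : ∀ x : ZMod 2, x + x = 0 := by decide
    exact this _
  rw [flipWord_apply, hπ, hcount]
  simp

/-- The sign homomorphism. -/
noncomputable def sgn : W →* Equiv.Perm (W × ZMod 2) :=
  cs.lift ⟨fun i => flipPerm cs i, flip_liftable cs⟩

lemma sgn_simple (i : B) : sgn cs (cs.simple i) = flipPerm cs i :=
  cs.lift_apply_simple (flip_liftable cs) i

lemma sgn_wordProd (ω : List B) : sgn cs (cs.wordProd ω) = flipWord cs ω := by
  induction ω with
  | nil => rw [cs.wordProd_nil, map_one, flipWord_nil]
  | cons i ω ih => rw [cs.wordProd_cons, map_mul, sgn_simple, ih, flipWord_cons]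

/-- The sign cocycle. -/
noncomputable def invSgn (w t : W) : ZMod 2 := ((sgn cs w) (t, 0)).2

lemma invSgn_eq_count (ω : List B) (t : W) :
    invSgn cs (cs.wordProd ω) t = ((cs.rightInvSeq ω).count t : ZMod 2) := by
  rw [invSgn, sgn_wordProd, flipWord_apply]
  simp

lemma sgn_apply (w t : W) (ε : ZMod 2) :
    sgn cs w (t, ε) = (w * t * w⁻¹, ε + invSgn cs w t) := by
  obtain ⟨ω, _, rfl⟩ := cs.exists_reduced_word' w
  rw [sgn_wordProd, flipWord_apply, invSgn, sgn_wordProd, flipWord_apply]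
  simp

lemma invSgn_mul (u v t : W) :
    invSgn cs (u * v) t = invSgn cs v t + invSgn cs u (v * t * v⁻¹) := by
  have h2 : sgn cs (u * v) (t, 0) = sgn cs u (sgn cs v (t, 0)) := by
    rw [map_mul]; rfl
  rw [sgn_apply cs v t 0, sgn_apply cs u (v * t * v⁻¹) (0 + invSgn cs v t),
    sgn_apply cs (u * v) t 0] at h2
  have h3 := congrArg Prod.snd h2
  simp only [] at h3
  simpa [add_assoc] using h3

lemma invSgn_one (t : W) : invSgn cs 1 t = 0 := by
  rw [invSgn, map_one]; rfl

lemma invSgn_simple (i : B) (t : W) :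
    invSgn cs (cs.simple i) t = if t = cs.simple i then 1 else 0 := by
  rw [invSgn, sgn_simple]
  show (flipFun cs i (t, 0)).2 = _
  simp [flipFun]

lemma invSgn_inv_add (x t : W) : invSgn cs x⁻¹ t + invSgn cs x (x⁻¹ * t * x) = 0 := by
  have h := invSgn_mul cs x x⁻¹ t
  rw [mul_inv_cancel, invSgn_one, inv_inv] at h
  exact h.symm

lemma invSgn_refl_self (t : W) (ht : cs.IsReflection t) : invSgn cs t t = 1 := by
  obtain ⟨x, i, rfl⟩ := ht
  have h1 : invSgn cs (x * cs.simple i * x⁻¹) (x * cs.simple i * x⁻¹)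
      = invSgn cs x⁻¹ (x * cs.simple i * x⁻¹)
        + invSgn cs (x * cs.simple i) (x⁻¹ * (x * cs.simple i * x⁻¹) * (x⁻¹)⁻¹) :=
    invSgn_mul cs (x * cs.simple i) x⁻¹ (x * cs.simple i * x⁻¹)
  have h2 : x⁻¹ * (x * cs.simple i * x⁻¹) * (x⁻¹)⁻¹ = cs.simple i := by group
  have h2' : x⁻¹ * (x * cs.simple i * x⁻¹) * x = cs.simple i := by group
  have h3 : invSgn cs (x * cs.simple i) (cs.simple i) = 1 + invSgn cs x (cs.simple i) := by
    rw [invSgn_mul cs x (cs.simple i) (cs.simple i), invSgn_simple, if_pos rfl]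
    congr 1
    congr 1
    rw [cs.inv_simple, cs.simple_mul_simple_cancel_right]
  have h4 := invSgn_inv_add cs x (x * cs.simple i * x⁻¹)
  rw [h2'] at h4
  rw [h1, h2, h3]
  calc invSgn cs x⁻¹ (x * cs.simple i * x⁻¹) + (1 + invSgn cs x (cs.simple i))
      = (invSgn cs x⁻¹ (x * cs.simple i * x⁻¹) + invSgn cs x (cs.simple i)) + 1 := by ring
    _ = 1 := by rw [h4, zero_add]

lemma zmod2_cases (x : ZMod 2) : x = 0 ∨ x = 1 := by
  have h : ∀ y : ZMod 2, y = 0 ∨ y = 1 := by decide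
  exact h x

lemma count_mem_of_cast_one {l : List W} {t : W} (h : ((l.count t : ℕ) : ZMod 2) = 1) :
    t ∈ l := by
  by_contra hm
  rw [List.count_eq_zero_of_not_mem hm] at h
  exact absurd h (by decide)

lemma isRightInversion_iff_invSgn (w t : W) (ht : cs.IsReflection t) :
    cs.IsRightInversion w t ↔ invSgn cs w t = 1 := by
  constructor
  · intro h
    by_contra hne
    have h0 : invSgn cs w t = 0 := (zmod2_cases _).resolve_right hne
    have h1 : invSgn cs (w * t) t = 1 := by
      rw [invSgn_mul]
      have htt : t * t * t⁻¹ = t := by rw [ht.mul_self, one_mul, ht.inv]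
      rw [htt, h0, invSgn_refl_self cs t ht, add_zero]
    obtain ⟨ω, hred, hw⟩ := cs.exists_reduced_word' (w * t)
    have hc : ((cs.rightInvSeq ω).count t : ZMod 2) = 1 := by
      rw [← invSgn_eq_count, ← hw]; exact h1
    have hinv := cs.isRightInversion_of_mem_rightInvSeq hred (count_mem_of_cast_one hc)
    rw [← hw] at hinv
    have h2 := hinv.2
    rw [mul_assoc, ht.mul_self, mul_one] at h2
    have h3 := h.2
    omega
  · intro h1
    obtain ⟨ω, hred, rfl⟩ := cs.exists_reduced_word' w
    have hc : ((cs.rightInvSeq ω).count t : ZMod 2) = 1 := by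
      rw [← invSgn_eq_count]; exact h1
    exact cs.isRightInversion_of_mem_rightInvSeq hred (count_mem_of_cast_one hc)

lemma setOf_isRightInversion_eq {ω : List B} (hred : cs.IsReduced ω) :
    {t | cs.IsRightInversion (cs.wordProd ω) t} = {t | t ∈ cs.rightInvSeq ω} := by
  ext t
  simp only [Set.mem_setOf_eq]
  constructor
  · intro h
    have h1 : invSgn cs (cs.wordProd ω) t = 1 :=
      (isRightInversion_iff_invSgn cs _ t h.1).mp h
    rw [invSgn_eq_count] at h1
    exact count_mem_of_cast_one h1
  · exact fun h => cs.isRightInversion_of_mem_rightInvSeq hred h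

lemma length_eq_ncard_inversions (w : W) :
    cs.length w = {t | cs.IsRightInversion w t}.ncard := by
  obtain ⟨ω, hred, rfl⟩ := cs.exists_reduced_word' w
  rw [setOf_isRightInversion_eq cs hred]
  have h1 : {t : W | t ∈ cs.rightInvSeq ω} = ↑(cs.rightInvSeq ω).toFinset := by
    ext t; simp
  rw [h1, Set.ncard_coe_finset, List.toFinset_card_of_nodup hred.nodup_rightInvSeq,
    cs.length_rightInvSeq]
  exact hred

lemma length_mul_of_max [Finite W] (w₀ : W) (hw₀ : ∀ w : W, cs.length w ≤ cs.length w₀)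
    (x : W) : cs.length (w₀ * x) + cs.length x = cs.length w₀ := by
  set T : Set W := {t | cs.IsReflection t} with hT
  set Nx : Set W := {t | cs.IsRightInversion x t} with hNx
  have hTfin : T.Finite := Set.toFinite T
  have hNx_sub : Nx ⊆ T := fun t ht => ht.1
  have hNw₀ : {t | cs.IsRightInversion w₀ t} = T := by
    ext t
    simp only [Set.mem_setOf_eq, hT]
    exact ⟨fun h => h.1,
      fun ht => ⟨ht, lt_of_le_of_ne (hw₀ _) (ht.length_mul_left_ne w₀)⟩⟩
  have hinvw₀ : ∀ t : W, cs.IsReflection t → invSgn cs w₀ t = 1 := by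
    intro t ht
    apply (isRightInversion_iff_invSgn cs w₀ t ht).mp
    have : t ∈ T := ht
    rw [← hNw₀] at this
    exact this
  have hNwx : {t | cs.IsRightInversion (w₀ * x) t} = T \ Nx := by
    ext t
    simp only [Set.mem_setOf_eq, Set.mem_diff, hT, hNx]
    constructor
    · intro h
      have ht := h.1
      have h1 : invSgn cs (w₀ * x) t = 1 := (isRightInversion_iff_invSgn cs _ t ht).mp h
      rw [invSgn_mul, hinvw₀ _ (ht.conj x)] at h1
      refine ⟨ht, fun hmem => ?_⟩
      rw [(isRightInversion_iff_invSgn cs x t ht).mp hmem] at h1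
      exact absurd h1 (by decide)
    · rintro ⟨ht, hnot⟩
      have h0 : invSgn cs x t = 0 := by
        rcases zmod2_cases (invSgn cs x t) with h | h
        · exact h
        · exact absurd ((isRightInversion_iff_invSgn cs x t ht).mpr h) hnot
      apply (isRightInversion_iff_invSgn cs (w₀ * x) t ht).mpr
      rw [invSgn_mul, h0, hinvw₀ _ (ht.conj x), zero_add]
  have c1 : cs.length (w₀ * x) = T.ncard - Nx.ncard := by
    rw [length_eq_ncard_inversions, hNwx, Set.ncard_diff hNx_sub (Set.toFinite Nx)]
  have c2 : cs.length x = Nx.ncard := by rw [length_eq_ncard_inversions, hNx]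
  have c3 : cs.length w₀ = T.ncard := by rw [length_eq_ncard_inversions, hNw₀]
  have c4 : Nx.ncard ≤ T.ncard := Set.ncard_le_ncard hNx_sub hTfin
  omega

end ExchAux

/-- For all `v < w₀ w₀L` in the Bruhat order, `w₀L w₀ v ∉ W_L`. -/
theorem w0L_w0_mul_not_mem {B W : Type*} [Group W] [Finite W] {M : CoxeterMatrix B}
    (cs : CoxeterSystem M W) (w₀ : W) (hw₀ : ∀ w : W, cs.length w ≤ cs.length w₀)
    (L : Set B) (w₀L : W) (hw₀Lmem : w₀L ∈ cs.parabolic L)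
    (hw₀L : ∀ w ∈ cs.parabolic L, cs.length w ≤ cs.length w₀L) :
    ∀ v : W, cs.bruhatLT v (w₀ * w₀L) → w₀L * w₀ * v ∉ cs.parabolic L := by
  intro v hv hmem
  obtain ⟨⟨ω, hred, hprod, ω', hsub, hv'⟩, hne⟩ := hv
  -- strict Bruhat gives strict length inequality
  have hlt : cs.length v < cs.length (w₀ * w₀L) := by
    have h1 : cs.length v ≤ ω'.length := by rw [hv']; exact cs.length_wordProd_le ω'
    have h2 : ω'.length ≤ ω.length := hsub.length_le
    have h3 : cs.length (w₀ * w₀L) = ω.length := by rw [hprod]; exact hred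
    rcases lt_or_eq_of_le (le_trans h1 (h2.trans h3.ge)) with h | h
    · exact h
    · exfalso
      have h4 : ω'.length = ω.length := by omega
      have h5 : ω' = ω := hsub.eq_of_length h4
      exact hne (by rw [hv', h5, hprod])
  -- if w₀L * w₀ * v ∈ W_L, then y := w₀ * v ∈ W_L
  have hy : w₀ * v ∈ cs.parabolic L := by
    have := mul_mem (inv_mem hw₀Lmem) hmem
    have he : w₀L⁻¹ * (w₀L * w₀ * v) = w₀ * v := by group
    rwa [he] at this
  have hylen : cs.length (w₀ * v) ≤ cs.length w₀L := hw₀L _ hy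
  -- ℓ w₀ ≤ ℓ (w₀ v) + ℓ v
  have htri : cs.length w₀ ≤ cs.length (w₀ * v) + cs.length v := by
    have h := cs.length_mul_le (w₀ * v) v⁻¹
    rw [show w₀ * v * v⁻¹ = w₀ by group, cs.length_inv] at h
    exact h
  have hmain := ExchAux.length_mul_of_max cs w₀ hw₀ w₀L
  omega
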